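/- (Narrow convergence of the proper component to δ₀ as λ → ∞ with ε fixed.) Fix σ > 0 and ε > 0, and let (λ_n) be positive reals with λ_n → +∞. Then for every c > 0, (∫_{|β| > c} (exp{(λ_n/(2σ²))·ε²/(β² + ε²)} − 1) dβ) / (∫_ℝ (exp{(λ_n/(2σ²))·ε²/(β² + ε²)} − 1) dβ) → 0 as n → ∞; consequently the normalized proper component of the SIC prior converges narrowly to the Dirac measure at 0. -/

import Mathlib

open Filter MeasureTheory

private lemma exp_sub_one_le_aux (x : ℝ) : Real.exp x - 1 ≤ x * Real.exp x := by
  have h := Real.add_one_le_exp (-x)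
  have hpos := (Real.exp_pos x).le
  have h2 : Real.exp (-x) * Real.exp x = 1 := by
    rw [← Real.exp_add]; simp
  nlinarith [mul_le_mul_of_nonneg_right h hpos]

private lemma integrable_h_aux (ε : ℝ) (hε : 0 < ε) :
    Integrable (fun β : ℝ => ε ^ 2 / (β ^ 2 + ε ^ 2)) := by
  have h2 : Integrable (fun x : ℝ => (1 + (x / ε) ^ 2)⁻¹) :=
    integrable_inv_one_add_sq.comp_div hε.ne'
  refine h2.congr ?_
  filter_upwards with x
  have hx : (0:ℝ) < x ^ 2 + ε ^ 2 := by positivity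
  field_simp
  ring

set_option maxHeartbeats 1000000 in
/-- **Narrow convergence of the proper component to `δ₀` as `λ → ∞` with `ε`
fixed.** With `σ, ε > 0` fixed and `λ_n → ∞`, for every `c > 0` the normalized
mass of the proper component outside `[−c, c]` vanishes. -/
theorem sic_proper_component_concentration_lambda (σ ε : ℝ) (hσ : 0 < σ) (hε : 0 < ε)
    (lam : ℕ → ℝ) (hlam_pos : ∀ n, 0 < lam n)
    (hlam : Tendsto lam atTop atTop)
    (c : ℝ) (hc : 0 < c) :
    Tendsto (fun n =>
        (∫ β in {b : ℝ | c < |b|},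
            (Real.exp (lam n / (2 * σ ^ 2) * (ε ^ 2 / (β ^ 2 + ε ^ 2))) - 1)) /
          ∫ β : ℝ, (Real.exp (lam n / (2 * σ ^ 2) * (ε ^ 2 / (β ^ 2 + ε ^ 2))) - 1))
      atTop (nhds 0) := by
  have hσ2 : (0:ℝ) < 2 * σ ^ 2 := by positivity
  set a : ℕ → ℝ := fun n => lam n / (2 * σ ^ 2) with ha_def
  have ha_pos : ∀ n, 0 < a n := fun n => div_pos (hlam_pos n) hσ2
  have haT : Tendsto a atTop atTop := hlam.atTop_div_const hσ2
  set h : ℝ → ℝ := fun β => ε ^ 2 / (β ^ 2 + ε ^ 2) with hh_def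
  have hh_pos : ∀ β, 0 < h β := fun β => div_pos (by positivity) (by positivity)
  have hh_le_one : ∀ β, h β ≤ 1 := by
    intro β
    rw [hh_def]
    rw [div_le_one (by positivity)]
    nlinarith [sq_nonneg β]
  set r : ℝ := ε ^ 2 / (c ^ 2 + ε ^ 2) with hr_def
  set s : ℝ := ε ^ 2 / ((c / 2) ^ 2 + ε ^ 2) with hs_def
  have hr_pos : 0 < r := by rw [hr_def]; positivity
  have hs_pos : 0 < s := by rw [hs_def]; positivity
  have hrs : r < s := by
    rw [hr_def, hs_def]
    apply div_lt_div_of_pos_left (by positivity) (by positivity)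
    nlinarith
  -- integrability
  have hInth : Integrable h := integrable_h_aux ε hε
  have hg_nonneg : ∀ n β, 0 ≤ Real.exp (a n * h β) - 1 := by
    intro n β
    have : (1:ℝ) ≤ Real.exp (a n * h β) :=
      Real.one_le_exp (mul_nonneg (ha_pos n).le (hh_pos β).le)
    linarith
  have hg_le : ∀ n β (t : ℝ), h β ≤ t →
      Real.exp (a n * h β) - 1 ≤ (a n * Real.exp (a n * t)) * h β := by
    intro n β t ht
    have h1 : Real.exp (a n * h β) - 1 ≤ (a n * h β) * Real.exp (a n * h β) :=
      exp_sub_one_le_aux _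
    have h2 : Real.exp (a n * h β) ≤ Real.exp (a n * t) :=
      Real.exp_le_exp.2 (by nlinarith [(ha_pos n)])
    have h3 : 0 ≤ a n * h β := mul_nonneg (ha_pos n).le (hh_pos β).le
    nlinarith [(hh_pos β)]
  have hconth : Continuous h := by
    rw [hh_def]
    exact continuous_const.div (by fun_prop) (fun β => by positivity)
  have hcont : ∀ n, Continuous (fun β : ℝ => Real.exp (a n * h β) - 1) := fun n =>
    (Real.continuous_exp.comp (continuous_const.mul hconth)).sub continuous_const
  have hInt : ∀ n, Integrable (fun β : ℝ => Real.exp (a n * h β) - 1) := by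
    intro n
    refine Integrable.mono' (hInth.const_mul (a n * Real.exp (a n * 1)))
      (hcont n).aestronglyMeasurable ?_
    filter_upwards with β
    rw [Real.norm_eq_abs, abs_of_nonneg (hg_nonneg n β)]
    exact hg_le n β 1 (hh_le_one β)
  -- the set
  set S : Set ℝ := {b : ℝ | c < |b|} with hS_def
  have hS_meas : MeasurableSet S := by
    have : S = (fun b : ℝ => |b|) ⁻¹' Set.Ioi c := rfl
    rw [this]
    exact (continuous_abs.measurable) measurableSet_Ioi
  set C : ℝ := ∫ β, h β with hC_def
  have hC_nonneg : 0 ≤ C := integral_nonneg fun β => (hh_pos β).le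
  -- numerator bound
  have hnum : ∀ n, (∫ β in S, (Real.exp (a n * h β) - 1)) ≤
      a n * Real.exp (a n * r) * C := by
    intro n
    have step1 : (∫ β in S, (Real.exp (a n * h β) - 1)) ≤
        ∫ β in S, (a n * Real.exp (a n * r)) * h β := by
      refine setIntegral_mono_on ((hInt n).integrableOn)
        ((hInth.const_mul _).integrableOn) hS_meas ?_
      intro β hβ
      refine hg_le n β r ?_
      rw [hh_def, hr_def]
      apply div_le_div_of_nonneg_left (by positivity) (by positivity)
      have : c < |β| := hβ
      nlinarith [abs_nonneg β, sq_abs β]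
    have step2 : (∫ β in S, (a n * Real.exp (a n * r)) * h β)
        = (a n * Real.exp (a n * r)) * ∫ β in S, h β := by
      exact integral_const_mul _ _
    have step3 : (∫ β in S, h β) ≤ C :=
      setIntegral_le_integral hInth (by filter_upwards with β using (hh_pos β).le)
    calc (∫ β in S, (Real.exp (a n * h β) - 1))
        ≤ (a n * Real.exp (a n * r)) * ∫ β in S, h β := by rw [← step2]; exact step1
      _ ≤ a n * Real.exp (a n * r) * C := by
          exact mul_le_mul_of_nonneg_left step3
            (mul_nonneg (ha_pos n).le (Real.exp_pos _).le)
  -- denominator bound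
  have hden : ∀ n, c * (Real.exp (a n * s) - 1) ≤
      ∫ β, (Real.exp (a n * h β) - 1) := by
    intro n
    have step1 : c * (Real.exp (a n * s) - 1) ≤
        ∫ β in Set.Icc (-(c/2)) (c/2), (Real.exp (a n * h β) - 1) := by
      have hvol : (volume (Set.Icc (-(c/2)) (c/2))).toReal = c := by
        rw [Real.volume_Icc]
        rw [ENNReal.toReal_ofReal (by linarith)]
        ring
      have hconst : (∫ _ in Set.Icc (-(c/2)) (c/2),
          (Real.exp (a n * s) - 1)) = c * (Real.exp (a n * s) - 1) := by
        rw [setIntegral_const, measureReal_def, hvol, smul_eq_mul]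
      rw [← hconst]
      refine setIntegral_mono_on ?_ ((hInt n).integrableOn) measurableSet_Icc ?_
      · exact integrableOn_const (by rw [Real.volume_Icc]; exact ENNReal.ofReal_ne_top)
      · intro β hβ
        have hβ2 : β ^ 2 ≤ (c/2) ^ 2 := by
          rcases hβ with ⟨h1, h2⟩
          nlinarith
        have : s ≤ h β := by
          rw [hh_def, hs_def]
          apply div_le_div_of_nonneg_left (by positivity) (by positivity) (by nlinarith)
        have := Real.exp_le_exp.2 (mul_le_mul_of_nonneg_left this (ha_pos n).le)
        linarith
    have step2 : (∫ β in Set.Icc (-(c/2)) (c/2), (Real.exp (a n * h β) - 1)) ≤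
        ∫ β, (Real.exp (a n * h β) - 1) :=
      setIntegral_le_integral (hInt n) (by filter_upwards with β using hg_nonneg n β)
    linarith
  have hden_pos : ∀ n, 0 < c * (Real.exp (a n * s) - 1) := by
    intro n
    apply mul_pos hc
    have h1 : 0 < a n * s := mul_pos (ha_pos n) hs_pos
    have h2 := Real.add_one_le_exp (a n * s)
    linarith
  -- the bounding sequence
  set B : ℕ → ℝ := fun n =>
    (a n * Real.exp (a n * r) * C) / (c * (Real.exp (a n * s) - 1)) with hB_def
  have hsq1 : ∀ n, 0 ≤ (∫ β in S, (Real.exp (a n * h β) - 1)) /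
      ∫ β, (Real.exp (a n * h β) - 1) := by
    intro n
    apply div_nonneg
    · exact setIntegral_nonneg hS_meas fun β _ => hg_nonneg n β
    · exact integral_nonneg fun β => hg_nonneg n β
  have hsq2 : ∀ n, (∫ β in S, (Real.exp (a n * h β) - 1)) /
      (∫ β, (Real.exp (a n * h β) - 1)) ≤ B n := by
    intro n
    exact div_le_div₀
      (mul_nonneg (mul_nonneg (ha_pos n).le (Real.exp_pos _).le) hC_nonneg)
      (hnum n) (hden_pos n) (hden n)
  -- B tends to 0
  have hB : Tendsto B atTop (nhds 0) := by
    have hG : Tendsto (fun t : ℝ =>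
        (t * Real.exp (t * r) * C) / (c * (Real.exp (t * s) - 1))) atTop (nhds 0) := by
      have key : ∀ t : ℝ, (t * Real.exp (t * r) * C) / (c * (Real.exp (t * s) - 1))
          = (C * (t * Real.exp (-(s - r) * t))) / (c * (1 - Real.exp (-(s * t)))) := by
        intro t
        have hxy : Real.exp (-(s - r) * t) * Real.exp (s * t) = Real.exp (t * r) := by
          rw [← Real.exp_add]; ring_nf
        have hfe : Real.exp (-(s * t)) * Real.exp (s * t) = 1 := by
          rw [← Real.exp_add]; simp
        have e1 : t * Real.exp (t * r) * C
            = (C * (t * Real.exp (-(s - r) * t))) * Real.exp (s * t) := by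
          linear_combination (-(C * t)) * hxy
        have e2 : c * (Real.exp (t * s) - 1)
            = (c * (1 - Real.exp (-(s * t)))) * Real.exp (s * t) := by
          rw [mul_comm t s]
          linear_combination c * hfe
        rw [e1, e2, mul_div_mul_right _ _ (Real.exp_ne_zero _)]
      simp only [key]
      have hnumlim : Tendsto (fun t : ℝ => C * (t * Real.exp (-(s - r) * t)))
          atTop (nhds (C * 0)) := by
        apply Tendsto.const_mul
        have hδ : 0 < s - r := by linarith
        have base := Real.tendsto_pow_mul_exp_neg_atTop_nhds_zero 1
        have hmul : Tendsto (fun t : ℝ => (s - r) * t) atTop atTop :=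
          Tendsto.const_mul_atTop hδ tendsto_id
        have comp : Tendsto (fun t : ℝ => ((s - r) * t) ^ 1 * Real.exp (-((s - r) * t)))
            atTop (nhds 0) := base.comp hmul
        have := comp.const_mul (1 / (s - r))
        rw [mul_zero] at this
        refine this.congr fun t => ?_
        simp only [pow_one]
        rw [neg_mul]
        field_simp
      have hdenlim : Tendsto (fun t : ℝ => c * (1 - Real.exp (-(s * t))))
          atTop (nhds (c * (1 - 0))) := by
        apply Tendsto.const_mul
        apply Tendsto.const_sub
        apply Real.tendsto_exp_atBot.comp
        exact tendsto_neg_atTop_atBot.comp (Tendsto.const_mul_atTop hs_pos tendsto_id)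
      rw [mul_zero] at hnumlim
      have := hnumlim.div hdenlim (by norm_num [hc.ne'])
      rw [sub_zero, mul_one, zero_div] at this
      exact this
    exact hG.comp haT
  exact squeeze_zero hsq1 hsq2 hB
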